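/- Let x ∈ ℂ be nonzero, n a nonzero integer, and set U° = diag(u₁, u₂) with u₁ - u₂ = x, and A the 2×2 matrix with 0 on the diagonal and 1 off the diagonal. Then there exists a polynomial matrix ψ(z) ∈ GL₂(ℂ[z]) with ψ(0) = Id satisfying z dψ/dz = (1/z)[U°, ψ(z)] - nAψ(z). Explicitly, writing D = diag(-1,1), the solution is ψ(z) = Σ_{k=0}^{|n|} ψ_k z^k with ψ_k = (∏_{j=0}^{k-1}(j² - n²))/(k!·x^k) · (Id - (k/n)A)·D^k for 1 ≤ k ≤ |n|, and ψ_k = 0 for k > |n|. -/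

import Mathlib

open Matrix Finset

open Polynomial

set_option maxHeartbeats 1000000
open Matrix Finset Polynomial

noncomputable def c (n : ℤ) (x : ℂ) (k : ℕ) : ℂ :=
  (∏ j ∈ Finset.range k, ((j : ℂ) ^ 2 - (n : ℂ) ^ 2)) / ((k.factorial : ℂ) * x ^ k)

noncomputable def psi (n : ℤ) (x : ℂ) (k : ℕ) : Matrix (Fin 2) (Fin 2) ℂ :=
  if k ≤ n.natAbs then
    c n x k • ((1 - ((k : ℂ) / (n : ℂ)) • !![(0:ℂ), 1; 1, 0]) * !![(-1 : ℂ), 0; 0, 1] ^ k)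
  else 0

lemma c_succ (n : ℤ) (x : ℂ) (k : ℕ) :
    c n x (k+1) = c n x k * (((k:ℂ)^2 - (n:ℂ)^2) / (((k:ℂ)+1) * x)) := by
  rw [c, c, div_mul_div_comm, Finset.prod_range_succ]
  congr 1
  push_cast [Nat.factorial_succ]
  ring

lemma psi_entries' (k : ℕ) (a b : ℂ) :
    b • ((1 - a • !![(0:ℂ), 1; 1, 0]) * !![(-1 : ℂ), 0; 0, 1] ^ k)
      = !![b * (-1:ℂ)^k, -(b*a); -(b*a) * (-1:ℂ)^k, b] := by
  have : !![(-1 : ℂ), 0; 0, 1] ^ k = !![(-1 : ℂ)^k, 0; 0, 1] := by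
    induction k with
    | zero => simp [Matrix.one_fin_two]
    | succ k ih => rw [pow_succ, ih, Matrix.mul_fin_two]; norm_num [pow_succ]
  rw [this, Matrix.one_fin_two, Matrix.smul_of]
  norm_num [Matrix.mul_fin_two]
  refine ⟨by ring, ?_⟩
  ext i; exact i.elim0

lemma psi_eq (n : ℤ) (x : ℂ) (k : ℕ) (hk : k ≤ n.natAbs) :
    psi n x k = !![c n x k * (-1:ℂ)^k, -(c n x k*((k:ℂ)/(n:ℂ)));
                   -(c n x k*((k:ℂ)/(n:ℂ))) * (-1:ℂ)^k, c n x k] := by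
  rw [psi, if_pos hk, psi_entries']

lemma recursion (u₁ u₂ x : ℂ) (hx : x ≠ 0) (hux : u₁ - u₂ = x)
    (n : ℤ) (hn : n ≠ 0) (k : ℕ) :
    !![u₁, 0; 0, u₂] * psi n x (k + 1) - psi n x (k + 1) * !![u₁, 0; 0, u₂]
      = ((n : ℂ) • !![(0:ℂ), 1; 1, 0] + (k : ℂ) • (1 : Matrix (Fin 2) (Fin 2) ℂ))
          * psi n x k := by
  have hn' : (n : ℂ) ≠ 0 := by exact_mod_cast Int.cast_ne_zero.2 hn
  have hk1 : ((k:ℂ) + 1) ≠ 0 := by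
    have : ((k+1 : ℕ) : ℂ) ≠ 0 := Nat.cast_ne_zero.2 k.succ_ne_zero
    push_cast at this; exact this
  have hu : u₁ = x + u₂ := by linear_combination hux
  rcases lt_trichotomy (k+1) (n.natAbs + 1) with h | h | h
  · -- k + 1 ≤ n.natAbs
    have h1 : k + 1 ≤ n.natAbs := by omega
    have h0 : k ≤ n.natAbs := by omega
    rw [psi_eq n x _ h1, psi_eq n x _ h0, c_succ]
    subst hu
    ext i j
    fin_cases i <;> fin_cases j <;>
      · simp [Matrix.mul_apply, Fin.sum_univ_two, Matrix.one_apply]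
        push_cast
        field_simp
        ring
  · -- k = n.natAbs
    have hk : k = n.natAbs := by omega
    have h2 : ¬ (k + 1 ≤ n.natAbs) := by omega
    have hN : ((k:ℂ))^2 = (n:ℂ)^2 := by
      have h1 : ((n.natAbs^2 : ℕ) : ℤ) = n^2 := by exact_mod_cast Int.natAbs_sq n
      rw [hk]
      calc ((n.natAbs:ℂ))^2 = (((n.natAbs^2 : ℕ) : ℤ) : ℂ) := by
            rw [Int.cast_natCast, Nat.cast_pow]
        _ = ((n^2 : ℤ) : ℂ) := by rw [h1]
        _ = (n:ℂ)^2 := by rw [Int.cast_pow]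
    have hL : !![u₁, 0; 0, u₂] * psi n x (k+1) - psi n x (k+1) * !![u₁, 0; 0, u₂] = 0 := by
      rw [psi, if_neg h2]; simp
    rw [hL, psi_eq n x _ hk.le]
    clear hL
    ext i j
    fin_cases i <;> fin_cases j <;>
      · simp [Matrix.mul_apply, Fin.sum_univ_two, Matrix.one_apply]
        field_simp
        try ring
        try linear_combination (c n x k) * hN
        try linear_combination (c n x k * (-1:ℂ)^k) * hN
        try linear_combination (c n x k - c n x k * (-1:ℂ)^k) * hN
        try linear_combination (c n x k * (-1:ℂ)^k - c n x k) * hN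
  · -- k > n.natAbs
    have h1 : ¬ (k + 1 ≤ n.natAbs) := by omega
    have h0 : ¬ (k ≤ n.natAbs) := by omega
    rw [psi, psi, if_neg h1, if_neg h0]
    simp

noncomputable def Psi (n : ℤ) (x : ℂ) : Matrix (Fin 2) (Fin 2) (Polynomial ℂ) :=
  ∑ k ∈ Finset.range (n.natAbs + 1), (X : Polynomial ℂ)^k • (psi n x k).map Polynomial.C

lemma Psi_coeff (n : ℤ) (x : ℂ) (m : ℕ) (i j : Fin 2) :
    ((Psi n x) i j).coeff m = psi n x m i j := by
  rw [Psi, Matrix.sum_apply]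
  have h1 : ∀ k, ((X : Polynomial ℂ)^k • (psi n x k).map Polynomial.C) i j
      = Polynomial.C (psi n x k i j) * X ^ k := by
    intro k
    rw [Matrix.smul_apply, Matrix.map_apply, smul_eq_mul, mul_comm]
  simp only [h1, Polynomial.finset_sum_coeff, Polynomial.coeff_C_mul_X_pow]
  rw [Finset.sum_ite_eq (Finset.range (n.natAbs + 1)) m (fun k => psi n x k i j)]
  by_cases hm : m ≤ n.natAbs
  · rw [if_pos (Finset.mem_range.2 (by omega))]
  · rw [if_neg (by rw [Finset.mem_range]; omega), psi, if_neg hm]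
    simp

lemma psi_zero (n : ℤ) (x : ℂ) : psi n x 0 = 1 := by
  rw [psi, if_pos (Nat.zero_le _)]
  simp [c]

section ODE
variable (u₁ u₂ x : ℂ) (n : ℤ)

lemma E00 (hx : x ≠ 0) (hux : u₁ - u₂ = x) (hn : n ≠ 0) :
    (X:Polynomial ℂ)^2 * derivative (Psi n x 0 0)
      = -(Polynomial.C (n:ℂ) * (Psi n x 1 0 * X)) := by
  apply Polynomial.ext; intro m
  rcases m with _ | _ | t
  · simp [Polynomial.coeff_X_pow_mul', Psi_coeff, psi_zero, Matrix.one_apply]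
  · simp [Polynomial.coeff_X_pow_mul', Polynomial.coeff_C_mul, Polynomial.coeff_mul_X,
      Psi_coeff, psi_zero, Matrix.one_apply]
  · have R := recursion u₁ u₂ x hx hux n hn (t+1)
    have R00 := congrFun (congrFun R 0) 0
    simp only [Matrix.mul_apply, Matrix.sub_apply, Matrix.add_apply, Matrix.smul_apply,
      Fin.sum_univ_two, Matrix.one_apply, smul_eq_mul] at R00
    norm_num at R00
    rw [show t+2 = t+2 from rfl, Polynomial.coeff_X_pow_mul (derivative (Psi n x 0 0)) 2 t,
      Polynomial.coeff_derivative, Polynomial.coeff_neg, Polynomial.coeff_C_mul,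
      show t+2 = (t+1)+1 from rfl, Polynomial.coeff_mul_X, Psi_coeff, Psi_coeff]
    push_cast at R00 ⊢
    linear_combination -R00

lemma E01 (hx : x ≠ 0) (hux : u₁ - u₂ = x) (hn : n ≠ 0) :
    (X:Polynomial ℂ)^2 * derivative (Psi n x 0 1)
      = Polynomial.C x * Psi n x 0 1 - Polynomial.C (n:ℂ) * (Psi n x 1 1 * X) := by
  apply Polynomial.ext; intro m
  rcases m with _ | _ | t
  · simp [Polynomial.coeff_X_pow_mul', Psi_coeff, psi_zero, Matrix.one_apply]
  · have R := recursion u₁ u₂ x hx hux n hn 0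
    have R' := congrFun (congrFun R 0) 1
    simp only [Matrix.mul_apply, Matrix.sub_apply, Matrix.add_apply, Matrix.smul_apply,
      Fin.sum_univ_two, Matrix.one_apply, smul_eq_mul] at R'
    norm_num [psi_zero, Matrix.one_apply] at R'
    rw [Polynomial.coeff_X_pow_mul', Polynomial.coeff_sub, Polynomial.coeff_C_mul,
      Polynomial.coeff_C_mul, Polynomial.coeff_mul_X,
      Psi_coeff, Psi_coeff, psi_zero]
    norm_num [Matrix.one_apply]
    linear_combination -R' + psi n x 1 0 1 * hux
  · have R := recursion u₁ u₂ x hx hux n hn (t+1)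
    have R' := congrFun (congrFun R 0) 1
    simp only [Matrix.mul_apply, Matrix.sub_apply, Matrix.add_apply, Matrix.smul_apply,
      Fin.sum_univ_two, Matrix.one_apply, smul_eq_mul] at R'
    norm_num at R'
    rw [Polynomial.coeff_X_pow_mul (derivative (Psi n x 0 1)) 2 t,
      Polynomial.coeff_derivative, Polynomial.coeff_sub, Polynomial.coeff_C_mul,
      Polynomial.coeff_C_mul, show t+2 = (t+1)+1 from rfl, Polynomial.coeff_mul_X,
      Psi_coeff, Psi_coeff, Psi_coeff]
    push_cast at R' ⊢
    linear_combination -R' + psi n x (t+2) 0 1 * hux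

lemma E10 (hx : x ≠ 0) (hux : u₁ - u₂ = x) (hn : n ≠ 0) :
    (X:Polynomial ℂ)^2 * derivative (Psi n x 1 0)
      = -(Polynomial.C x * Psi n x 1 0) - Polynomial.C (n:ℂ) * (Psi n x 0 0 * X) := by
  apply Polynomial.ext; intro m
  rcases m with _ | _ | t
  · simp [Polynomial.coeff_X_pow_mul', Psi_coeff, psi_zero, Matrix.one_apply]
  · have R := recursion u₁ u₂ x hx hux n hn 0
    have R' := congrFun (congrFun R 1) 0
    simp only [Matrix.mul_apply, Matrix.sub_apply, Matrix.add_apply, Matrix.smul_apply,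
      Fin.sum_univ_two, Matrix.one_apply, smul_eq_mul] at R'
    norm_num [psi_zero, Matrix.one_apply] at R'
    rw [Polynomial.coeff_X_pow_mul', Polynomial.coeff_sub, Polynomial.coeff_neg,
      Polynomial.coeff_C_mul, Polynomial.coeff_C_mul, Polynomial.coeff_mul_X,
      Psi_coeff, Psi_coeff, psi_zero]
    norm_num [Matrix.one_apply]
    linear_combination -R' - psi n x 1 1 0 * hux
  · have R := recursion u₁ u₂ x hx hux n hn (t+1)
    have R' := congrFun (congrFun R 1) 0
    simp only [Matrix.mul_apply, Matrix.sub_apply, Matrix.add_apply, Matrix.smul_apply,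
      Fin.sum_univ_two, Matrix.one_apply, smul_eq_mul] at R'
    norm_num at R'
    rw [Polynomial.coeff_X_pow_mul (derivative (Psi n x 1 0)) 2 t,
      Polynomial.coeff_derivative, Polynomial.coeff_sub, Polynomial.coeff_neg,
      Polynomial.coeff_C_mul, Polynomial.coeff_C_mul,
      show t+2 = (t+1)+1 from rfl, Polynomial.coeff_mul_X,
      Psi_coeff, Psi_coeff, Psi_coeff]
    push_cast at R' ⊢
    linear_combination -R' - psi n x (t+2) 1 0 * hux

lemma E11 (hx : x ≠ 0) (hux : u₁ - u₂ = x) (hn : n ≠ 0) :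
    (X:Polynomial ℂ)^2 * derivative (Psi n x 1 1)
      = -(Polynomial.C (n:ℂ) * (Psi n x 0 1 * X)) := by
  apply Polynomial.ext; intro m
  rcases m with _ | _ | t
  · simp [Polynomial.coeff_X_pow_mul', Psi_coeff, psi_zero, Matrix.one_apply]
  · simp [Polynomial.coeff_X_pow_mul', Polynomial.coeff_C_mul, Polynomial.coeff_mul_X,
      Psi_coeff, psi_zero, Matrix.one_apply]
  · have R := recursion u₁ u₂ x hx hux n hn (t+1)
    have R' := congrFun (congrFun R 1) 1
    simp only [Matrix.mul_apply, Matrix.sub_apply, Matrix.add_apply, Matrix.smul_apply,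
      Fin.sum_univ_two, Matrix.one_apply, smul_eq_mul] at R'
    norm_num at R'
    rw [Polynomial.coeff_X_pow_mul (derivative (Psi n x 1 1)) 2 t,
      Polynomial.coeff_derivative, Polynomial.coeff_neg, Polynomial.coeff_C_mul,
      show t+2 = (t+1)+1 from rfl, Polynomial.coeff_mul_X, Psi_coeff, Psi_coeff]
    push_cast at R' ⊢
    linear_combination -R'

end ODE

lemma detPsi (hx : x ≠ 0) (hux : u₁ - u₂ = x) (hn : n ≠ 0) :
    Psi n x 0 0 * Psi n x 1 1 - Psi n x 0 1 * Psi n x 1 0 = 1 := by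
  set P := Psi n x with hP
  have hder : (X:Polynomial ℂ)^2 * derivative (P 0 0 * P 1 1 - P 0 1 * P 1 0) = 0 := by
    rw [derivative_sub, derivative_mul, derivative_mul]
    linear_combination (P 1 1) * E00 u₁ u₂ x n hx hux hn + (P 0 0) * E11 u₁ u₂ x n hx hux hn
      - (P 1 0) * E01 u₁ u₂ x n hx hux hn - (P 0 1) * E10 u₁ u₂ x n hx hux hn
  have h0 : derivative (P 0 0 * P 1 1 - P 0 1 * P 1 0) = 0 := by
    rcases mul_eq_zero.1 hder with h | h
    · exact absurd h (pow_ne_zero 2 Polynomial.X_ne_zero)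
    · exact h
  have hC := Polynomial.eq_C_of_derivative_eq_zero h0
  rw [hC]
  have : (P 0 0 * P 1 1 - P 0 1 * P 1 0).coeff 0 = 1 := by
    rw [Polynomial.coeff_sub, Polynomial.mul_coeff_zero, Polynomial.mul_coeff_zero,
      Psi_coeff, Psi_coeff, Psi_coeff, Psi_coeff, psi_zero]
    norm_num [Matrix.one_apply]
  rw [this, Polynomial.C_1]

noncomputable def chi (n : ℤ) (x : ℂ) (k : ℕ) : Matrix (Fin 2) (Fin 2) ℂ :=
  !![psi n x k 1 1, -(psi n x k 0 1); -(psi n x k 1 0), psi n x k 0 0]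

lemma key (n : ℤ) (x : ℂ) (m : ℕ) (i p q r : Fin 2) :
    ∑ j ∈ Finset.range (m+1), psi n x j i p * psi n x (m-j) q r
      = ((Psi n x i p) * (Psi n x q r)).coeff m := by
  rw [Polynomial.coeff_mul, Finset.Nat.sum_antidiagonal_eq_sum_range_succ_mk]
  simp [Psi_coeff]


/-- For `x ≠ 0`, `n ∈ ℤ \ {0}`, `U° = diag(u₁,u₂)` with `u₁ - u₂ = x` and
`A = [[0,1],[1,0]]`, there is `ψ(z) = Σ_k ψ_k z^k ∈ GL₂(ℂ[z])` with `ψ(0) = Id` solving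
`z dψ/dz = (1/z)[U°,ψ] - nAψ`, i.e. `[U°,ψ_{k+1}] = (nA + k·Id)ψ_k` for all `k ≥ 0`;
explicitly `ψ_k = (∏_{j<k}(j²-n²))/(k!·x^k) · (Id - (k/n)A)·D^k` for `1 ≤ k ≤ |n|`,
`D = diag(-1,1)`, and `ψ_k = 0` for `k > |n|`.  Invertibility in `GL₂(ℂ[z])` is stated
via a polynomial inverse `χ` with Cauchy-product `ψ·χ = Id`. -/
theorem statement6 (u₁ u₂ x : ℂ) (hx : x ≠ 0) (hux : u₁ - u₂ = x)
    (n : ℤ) (hn : n ≠ 0) :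
    ∃ ψ χ : ℕ → Matrix (Fin 2) (Fin 2) ℂ,
      ψ 0 = 1 ∧
      -- the differential equation, coefficientwise
      (∀ k : ℕ,
        !![u₁, 0; 0, u₂] * ψ (k + 1) - ψ (k + 1) * !![u₁, 0; 0, u₂]
          = ((n : ℂ) • !![(0:ℂ), 1; 1, 0] + (k : ℂ) • (1 : Matrix (Fin 2) (Fin 2) ℂ))
              * ψ k) ∧
      -- the explicit formula for the coefficients
      (∀ k : ℕ, 1 ≤ k → k ≤ n.natAbs →
        ψ k = ((∏ j ∈ Finset.range k, ((j : ℂ) ^ 2 - (n : ℂ) ^ 2))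
                / ((k.factorial : ℂ) * x ^ k)) •
              ((1 - ((k : ℂ) / (n : ℂ)) • !![(0:ℂ), 1; 1, 0])
                * !![(-1 : ℂ), 0; 0, 1] ^ k)) ∧
      (∀ k : ℕ, n.natAbs < k → ψ k = 0) ∧
      -- ψ is invertible as a polynomial matrix (element of GL₂(ℂ[z]))
      (∃ N : ℕ, ∀ k, N < k → χ k = 0) ∧
      (∀ m : ℕ, ∑ j ∈ Finset.range (m + 1), ψ j * χ (m - j)
          = if m = 0 then 1 else 0) := by
  refine ⟨psi n x, chi n x, psi_zero n x, recursion u₁ u₂ x hx hux n hn, ?_, ?_, ?_, ?_⟩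
  · intro k _ hk2
    rw [psi, if_pos hk2]; rfl
  · intro k hk
    rw [psi, if_neg (by omega)]
  · refine ⟨n.natAbs, fun k hk => ?_⟩
    have h0 : psi n x k = 0 := by rw [psi, if_neg (by omega)]
    rw [chi, h0]
    norm_num
    ext i j; fin_cases i <;> fin_cases j <;> simp
  · intro m
    have hdet := detPsi hx hux hn
    ext i j
    rw [Matrix.sum_apply]
    fin_cases i <;> fin_cases j
    · calc ∑ j ∈ Finset.range (m+1), (psi n x j * chi n x (m-j)) 0 0
          = ∑ j ∈ Finset.range (m+1), (psi n x j 0 0 * psi n x (m-j) 1 1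
              - psi n x j 0 1 * psi n x (m-j) 1 0) := by
            refine Finset.sum_congr rfl (fun j _ => ?_)
            simp [Matrix.mul_apply, Fin.sum_univ_two, chi]; ring
        _ = ((Psi n x 0 0) * (Psi n x 1 1)).coeff m
              - ((Psi n x 0 1) * (Psi n x 1 0)).coeff m := by
            rw [Finset.sum_sub_distrib, key, key]
        _ = ((1 : Polynomial ℂ)).coeff m := by rw [← Polynomial.coeff_sub, hdet]
        _ = (if m = 0 then (1 : Matrix (Fin 2) (Fin 2) ℂ) else 0) 0 0 := by
            rw [Polynomial.coeff_one, apply_ite (fun M : Matrix (Fin 2) (Fin 2) ℂ => M 0 0)]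
            simp
    · calc ∑ j ∈ Finset.range (m+1), (psi n x j * chi n x (m-j)) 0 1
          = ∑ j ∈ Finset.range (m+1), (psi n x j 0 1 * psi n x (m-j) 0 0
              - psi n x j 0 0 * psi n x (m-j) 0 1) := by
            refine Finset.sum_congr rfl (fun j _ => ?_)
            simp [Matrix.mul_apply, Fin.sum_univ_two, chi]; ring
        _ = ((Psi n x 0 1) * (Psi n x 0 0)).coeff m
              - ((Psi n x 0 0) * (Psi n x 0 1)).coeff m := by
            rw [Finset.sum_sub_distrib, key, key]
        _ = 0 := by rw [mul_comm]; ring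
        _ = (if m = 0 then (1 : Matrix (Fin 2) (Fin 2) ℂ) else 0) 0 1 := by
            rw [apply_ite (fun M : Matrix (Fin 2) (Fin 2) ℂ => M 0 1)]
            simp [Matrix.one_apply]
    · calc ∑ j ∈ Finset.range (m+1), (psi n x j * chi n x (m-j)) 1 0
          = ∑ j ∈ Finset.range (m+1), (psi n x j 1 0 * psi n x (m-j) 1 1
              - psi n x j 1 1 * psi n x (m-j) 1 0) := by
            refine Finset.sum_congr rfl (fun j _ => ?_)
            simp [Matrix.mul_apply, Fin.sum_univ_two, chi]; ring
        _ = ((Psi n x 1 0) * (Psi n x 1 1)).coeff m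
              - ((Psi n x 1 1) * (Psi n x 1 0)).coeff m := by
            rw [Finset.sum_sub_distrib, key, key]
        _ = 0 := by rw [mul_comm]; ring
        _ = (if m = 0 then (1 : Matrix (Fin 2) (Fin 2) ℂ) else 0) 1 0 := by
            rw [apply_ite (fun M : Matrix (Fin 2) (Fin 2) ℂ => M 1 0)]
            simp [Matrix.one_apply]
    · calc ∑ j ∈ Finset.range (m+1), (psi n x j * chi n x (m-j)) 1 1
          = ∑ j ∈ Finset.range (m+1), (psi n x j 1 1 * psi n x (m-j) 0 0
              - psi n x j 1 0 * psi n x (m-j) 0 1) := by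
            refine Finset.sum_congr rfl (fun j _ => ?_)
            simp [Matrix.mul_apply, Fin.sum_univ_two, chi]; ring
        _ = ((Psi n x 1 1) * (Psi n x 0 0)).coeff m
              - ((Psi n x 1 0) * (Psi n x 0 1)).coeff m := by
            rw [Finset.sum_sub_distrib, key, key]
        _ = ((1 : Polynomial ℂ)).coeff m := by
            rw [mul_comm (Psi n x 1 1), mul_comm (Psi n x 1 0), ← Polynomial.coeff_sub, hdet]
        _ = (if m = 0 then (1 : Matrix (Fin 2) (Fin 2) ℂ) else 0) 1 1 := by
            rw [Polynomial.coeff_one, apply_ite (fun M : Matrix (Fin 2) (Fin 2) ℂ => M 1 1)]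
            simp [Matrix.one_apply]
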